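/- Let {p_ℓ : ℓ ∈ 𝒜} be a probability distribution on a countable alphabet 𝒜, let X_1,…,X_n be an i.i.d. sample from it, and let r be an integer with 0 ≤ r ≤ n−1. Then the bias of Turing's estimator satisfies E[T_{r,n} − π_{r,n}] = C(n,r) Σ_{ℓ∈𝒜} p_ℓ^{r+1} (1−p_ℓ)^{n−r−1} (p_ℓ − r/n), where C(n,r) denotes the binomial coefficient n choose r. -/

import Mathlib

open Filter Topology

noncomputable section

variable {A : Type*} [DecidableEq A]

/-- `y_{ℓ,n}`: the number of times letter `ℓ` appears in the sample `ω`. -/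
def occ {n : ℕ} (ω : Fin n → A) (ℓ : A) : ℕ :=
  (Finset.univ.filter fun i => ω i = ℓ).card

/-- `N_{r,n}`: the number of letters appearing exactly `r` times in `ω` (valid for `r ≥ 1`). -/
def Ncount {n : ℕ} (ω : Fin n → A) (r : ℕ) : ℕ :=
  ((Finset.univ.image ω).filter fun ℓ => occ ω ℓ = r).card

/-- `π_{r,n}`: the `r`-th occupancy probability. -/
def occProb {n : ℕ} (p : A → ℝ) (ω : Fin n → A) (r : ℕ) : ℝ :=
  ∑' ℓ : A, p ℓ * (if occ ω ℓ = r then 1 else 0)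

/-- `T_{r,n}`: Turing's estimator. -/
def turing {n : ℕ} (ω : Fin n → A) (r : ℕ) : ℝ :=
  ((r : ℝ) + 1) * (Ncount ω (r + 1) : ℝ) / (n : ℝ)

/-- The sum over all samples `ω : Fin n → A` of a product `∏ i, f i (ω i)` is the product
of the individual sums, for nonnegative real families. -/
lemma hasSum_pi_prod {A : Type*} : ∀ (n : ℕ) (f : Fin n → A → ℝ) (s : Fin n → ℝ),
    (∀ i a, 0 ≤ f i a) → (∀ i, HasSum (f i) (s i)) →
    HasSum (fun ω : Fin n → A => ∏ i, f i (ω i)) (∏ i, s i) := by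
  intro n
  induction n with
  | zero =>
    intro f s _ _
    simp only [Finset.univ_eq_empty, Finset.prod_empty]
    exact hasSum_single default (fun b hb => absurd (Subsingleton.elim b default) hb)
  | succ m ih =>
    intro f s hf0 hf
    have h1 := hf 0
    have h2 := ih (fun i => f i.succ) (fun i => s i.succ) (fun i a => hf0 i.succ a)
      (fun i => hf i.succ)
    have hsumm : Summable (fun x : A × (Fin m → A) =>
        f 0 x.1 * ∏ i : Fin m, f i.succ (x.2 i)) := by
      apply Summable.mul_of_nonneg h1.summable h2.summable
      · exact fun a => hf0 0 a
      · exact fun ω => Finset.prod_nonneg fun i _ => hf0 _ _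
    have hmul : HasSum (fun x : A × (Fin m → A) => f 0 x.1 * ∏ i : Fin m, f i.succ (x.2 i))
        (s 0 * ∏ i : Fin m, s i.succ) := by
      apply HasSum.mul h1 h2 hsumm
    have key := (Fin.consEquiv (fun _ : Fin (m+1) => A)).symm.hasSum_iff.mpr hmul
    rw [Fin.prod_univ_succ s]
    have heq : ((fun x : A × (Fin m → A) => f 0 x.1 * ∏ i : Fin m, f i.succ (x.2 i)) ∘
        (Fin.consEquiv (fun _ : Fin (m+1) => A)).symm) = fun ω : Fin (m+1) → A => ∏ i, f i (ω i) := by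
      funext ω
      simp [Fin.prod_univ_succ, Fin.tail]
    rwa [heq] at key

/-- The probability that letter `ℓ` occurs exactly `k` times is binomial. -/
lemma hasSum_binom {A : Type*} [DecidableEq A] (p : A → ℝ) (hp0 : ∀ ℓ, 0 ≤ p ℓ)
    (hp1 : HasSum p 1) (n k : ℕ) (ℓ : A) :
    HasSum (fun ω : Fin n → A => (∏ i, p (ω i)) * (if occ ω ℓ = k then (1:ℝ) else 0))
      ((n.choose k : ℝ) * (p ℓ ^ k * (1 - p ℓ) ^ (n - k))) := by
  classical
  set q : Finset (Fin n) → Fin n → A → ℝ := fun S i a =>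
    if i ∈ S then (if a = ℓ then p a else 0) else (if a = ℓ then 0 else p a) with hq
  have hq0 : ∀ S i a, 0 ≤ q S i a := by
    intro S i a; simp only [q]; split <;> split <;> simp [hp0]
  have hrow : ∀ (S : Finset (Fin n)) (i : Fin n),
      HasSum (q S i) (if i ∈ S then p ℓ else 1 - p ℓ) := by
    intro S i
    by_cases hi : i ∈ S
    · simp only [q, hi, if_true]
      have he : (fun a => if a = ℓ then p a else 0) = fun a => if a = ℓ then p ℓ else 0 := by
        funext a; split <;> simp_all
      rw [he]
      exact hasSum_ite_eq ℓ (p ℓ)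
    · simp only [q, hi, if_false]
      have he : (fun a => if a = ℓ then 0 else p a)
          = fun a => p a - (if a = ℓ then p ℓ else 0) := by
        funext a; split <;> simp_all
      rw [he]
      exact hp1.sub (hasSum_ite_eq ℓ (p ℓ))
  have hF : ∀ S ∈ Finset.univ.powersetCard k,
      HasSum (fun ω : Fin n → A => ∏ i, q S i (ω i)) (p ℓ ^ k * (1 - p ℓ) ^ (n - k)) := by
    intro S hS
    have hcard : S.card = k := Finset.mem_powersetCard_univ.mp hS
    have h := hasSum_pi_prod n (q S) (fun i => if i ∈ S then p ℓ else 1 - p ℓ)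
      (hq0 S) (hrow S)
    have hprod : (∏ i : Fin n, if i ∈ S then p ℓ else 1 - p ℓ)
        = p ℓ ^ k * (1 - p ℓ) ^ (n - k) := by
      rw [← Finset.prod_mul_prod_compl S]
      rw [Finset.prod_congr rfl (fun i hi => if_pos hi),
        Finset.prod_congr rfl (fun i hi => if_neg (Finset.mem_compl.mp hi)),
        Finset.prod_const, Finset.prod_const, hcard, Finset.card_compl,
        Fintype.card_fin, hcard]
    rwa [hprod] at h
  have hpt : ∀ ω : Fin n → A,
      (∏ i, p (ω i)) * (if occ ω ℓ = k then (1:ℝ) else 0)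
        = ∑ S ∈ Finset.univ.powersetCard k, ∏ i, q S i (ω i) := by
    intro ω
    set T : Finset (Fin n) := Finset.univ.filter (fun i => ω i = ℓ) with hT
    have hqT : ∀ S : Finset (Fin n),
        (∏ i, q S i (ω i)) = if S = T then ∏ i, p (ω i) else 0 := by
      intro S
      by_cases hST : S = T
      · subst hST
        rw [if_pos rfl]
        apply Finset.prod_congr rfl
        intro i _
        by_cases hi : i ∈ T
        · have hωi : ω i = ℓ := (Finset.mem_filter.mp hi).2
          simp [q, hi, hωi]
        · have hωi : ω i ≠ ℓ := fun h => hi (Finset.mem_filter.mpr ⟨Finset.mem_univ i, h⟩)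
          simp [q, hi, hωi]
      · rw [if_neg hST]
        obtain ⟨i, hi⟩ : ∃ i, (i ∈ S ∧ i ∉ T) ∨ (i ∉ S ∧ i ∈ T) := by
          by_contra h
          push_neg at h
          exact hST (Finset.ext fun i => by
            have := h i
            tauto)
        apply Finset.prod_eq_zero (Finset.mem_univ i)
        rcases hi with ⟨h1, h2⟩ | ⟨h1, h2⟩
        · have hωi : ω i ≠ ℓ := fun h => h2 (Finset.mem_filter.mpr ⟨Finset.mem_univ i, h⟩)
          simp [q, h1, hωi]
        · have hωi : ω i = ℓ := (Finset.mem_filter.mp h2).2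
          simp [q, h1, hωi]
    have hsum : ∑ S ∈ Finset.univ.powersetCard k, ∏ i, q S i (ω i)
        = if T ∈ Finset.univ.powersetCard k then ∏ i, p (ω i) else 0 := by
      rw [Finset.sum_congr rfl (fun S _ => hqT S)]
      exact Finset.sum_ite_eq' _ T _
    rw [hsum]
    have hocc : occ ω ℓ = T.card := rfl
    by_cases hc : occ ω ℓ = k
    · have hTk : T.card = k := by omega
      rw [if_pos hc, if_pos (Finset.mem_powersetCard_univ.mpr hTk), mul_one]
    · have hTk : T ∉ Finset.univ.powersetCard k := fun h => hc (by
        have h2 := Finset.mem_powersetCard_univ.mp h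
        omega)
      rw [if_neg hc, if_neg hTk, mul_zero]
  have htot := hasSum_sum hF
  have : (∑ _S ∈ (Finset.univ : Finset (Fin n)).powersetCard k,
        (p ℓ ^ k * (1 - p ℓ) ^ (n - k)))
      = (n.choose k : ℝ) * (p ℓ ^ k * (1 - p ℓ) ^ (n - k)) := by
    rw [Finset.sum_const, nsmul_eq_mul, Finset.card_powersetCard, Finset.card_univ,
      Fintype.card_fin]
  rw [this] at htot
  have hfe : (fun ω : Fin n → A => (∏ i, p (ω i)) * (if occ ω ℓ = k then (1:ℝ) else 0))
      = fun ω => ∑ S ∈ Finset.univ.powersetCard k, ∏ i, q S i (ω i) := funext hpt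
  rw [hfe]
  exact htot

/-- `Ncount ω k` as an (infinite) sum of indicators, for `k ≠ 0`. -/
lemma hasSum_indicator_Ncount {A : Type*} [DecidableEq A] {n : ℕ} (ω : Fin n → A) {k : ℕ}
    (hk : k ≠ 0) :
    HasSum (fun ℓ : A => if occ ω ℓ = k then (1:ℝ) else 0) ((Ncount ω k : ℝ)) := by
  classical
  have h0 : ∀ ℓ ∉ Finset.univ.image ω, (if occ ω ℓ = k then (1:ℝ) else 0) = 0 := by
    intro ℓ hℓ
    have hocc : occ ω ℓ = 0 := by
      rw [occ, Finset.card_eq_zero]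
      ext i
      simp only [Finset.mem_filter, Finset.mem_univ, true_and, Finset.notMem_empty, iff_false]
      intro h
      exact hℓ (Finset.mem_image.mpr ⟨i, Finset.mem_univ i, h⟩)
    rw [if_neg (by omega)]
  have h := hasSum_sum_of_ne_finset_zero (L := SummationFilter.unconditional A) h0
  have hs : ∑ ℓ ∈ Finset.univ.image ω, (if occ ω ℓ = k then (1:ℝ) else 0)
      = (Ncount ω k : ℝ) := by
    rw [Finset.sum_boole, Ncount]
  rwa [hs] at h

/-- for a probability distribution `p` on a countable alphabet `A`, an i.i.d.
sample of size `n` and `0 ≤ r ≤ n - 1`, the bias of Turing's estimator satisfies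
`E[T_{r,n} - π_{r,n}] = (n choose r) Σ_ℓ p_ℓ^{r+1} (1-p_ℓ)^{n-r-1} (p_ℓ - r/n)`. -/
theorem turing_bias {A : Type*} [Countable A] [DecidableEq A]
    (p : A → ℝ) (hp0 : ∀ ℓ, 0 ≤ p ℓ) (hp1 : HasSum p 1)
    (n r : ℕ) (hr : r + 1 ≤ n) :
    ∑' ω : Fin n → A, (∏ i, p (ω i)) * (turing ω r - occProb p ω r)
      = (n.choose r : ℝ) *
          ∑' ℓ : A, p ℓ ^ (r + 1) * (1 - p ℓ) ^ (n - r - 1) * (p ℓ - (r : ℝ) / (n : ℝ)) := by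
  classical
  have hn0 : 0 < n := lt_of_lt_of_le (Nat.succ_pos r) hr
  have hnne : (n : ℝ) ≠ 0 := Nat.cast_ne_zero.mpr hn0.ne'
  have hple : ∀ ℓ, p ℓ ≤ 1 := fun ℓ => le_hasSum hp1 ℓ (fun i _ => hp0 i)
  have h1p : ∀ ℓ, 0 ≤ 1 - p ℓ := fun ℓ => by linarith [hple ℓ]
  -- bounds for the series u, v
  have hub : ∀ (k : ℕ) (ℓ : A), p ℓ ^ (r+1) * (1 - p ℓ) ^ k ≤ p ℓ := by
    intro k ℓ
    calc p ℓ ^ (r+1) * (1 - p ℓ) ^ k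
        ≤ p ℓ ^ (r+1) * 1 := by
          apply mul_le_mul_of_nonneg_left (pow_le_one₀ (h1p ℓ) (by linarith [hp0 ℓ]))
            (pow_nonneg (hp0 ℓ) _)
      _ = p ℓ ^ (r+1) := mul_one _
      _ ≤ p ℓ ^ 1 := pow_le_pow_of_le_one (hp0 ℓ) (hple ℓ) (by omega)
      _ = p ℓ := pow_one _
  have hub0 : ∀ (k : ℕ) (ℓ : A), 0 ≤ p ℓ ^ (r+1) * (1 - p ℓ) ^ k := fun k ℓ =>
    mul_nonneg (pow_nonneg (hp0 ℓ) _) (pow_nonneg (h1p ℓ) _)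
  have hUsum : Summable (fun ℓ => p ℓ ^ (r+1) * (1 - p ℓ) ^ (n - r - 1)) :=
    Summable.of_nonneg_of_le (hub0 _) (hub _) hp1.summable
  have hVsum : Summable (fun ℓ => p ℓ ^ (r+1) * (1 - p ℓ) ^ (n - r)) :=
    Summable.of_nonneg_of_le (hub0 _) (hub _) hp1.summable
  -- the Turing part
  set F1 : A → (Fin n → A) → ℝ :=
    fun ℓ ω => (∏ i, p (ω i)) * (if occ ω ℓ = r + 1 then (1:ℝ) else 0) with hF1d
  have hF1nn : ∀ (ℓ : A) (ω : Fin n → A), 0 ≤ F1 ℓ ω := fun ℓ ω =>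
    mul_nonneg (Finset.prod_nonneg fun i _ => hp0 _) (by split <;> norm_num)
  have hF1ℓ : ∀ ℓ, HasSum (F1 ℓ)
      ((n.choose (r+1) : ℝ) * (p ℓ ^ (r+1) * (1 - p ℓ) ^ (n - r - 1))) := by
    intro ℓ
    have h := hasSum_binom p hp0 hp1 n (r+1) ℓ
    have he : n - (r+1) = n - r - 1 := by omega
    rw [he] at h
    exact h
  have hF1ω : ∀ ω : Fin n → A, HasSum (fun ℓ => F1 ℓ ω)
      ((∏ i, p (ω i)) * (Ncount ω (r+1) : ℝ)) :=
    fun ω => (hasSum_indicator_Ncount ω (Nat.succ_ne_zero r)).mul_left _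
  have hF1sum : Summable (fun z : A × (Fin n → A) => F1 z.1 z.2) := by
    refine (summable_prod_of_nonneg (fun z => hF1nn z.1 z.2)).mpr
      ⟨fun ℓ => (hF1ℓ ℓ).summable, ?_⟩
    apply Summable.congr (hUsum.mul_left ((n.choose (r+1) : ℝ)))
    intro ℓ
    exact ((hF1ℓ ℓ).tsum_eq).symm
  have hNsummable : Summable (fun ω : Fin n → A => (∏ i, p (ω i)) * (Ncount ω (r+1) : ℝ)) := by
    have hswap : Summable (fun z : (Fin n → A) × A => F1 z.2 z.1) := hF1sum.prod_symm
    have h := ((summable_prod_of_nonneg (fun z : (Fin n → A) × A => hF1nn z.2 z.1)).mp hswap).2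
    apply Summable.congr h
    intro ω
    exact (hF1ω ω).tsum_eq
  have hNtsum : ∑' ω : Fin n → A, (∏ i, p (ω i)) * (Ncount ω (r+1) : ℝ)
      = (n.choose (r+1) : ℝ) * ∑' ℓ, p ℓ ^ (r+1) * (1 - p ℓ) ^ (n - r - 1) := by
    calc ∑' ω : Fin n → A, (∏ i, p (ω i)) * (Ncount ω (r+1) : ℝ)
        = ∑' (ω : Fin n → A), ∑' ℓ, F1 ℓ ω := tsum_congr fun ω => ((hF1ω ω).tsum_eq).symm
      _ = ∑' (ℓ : A), ∑' ω, F1 ℓ ω :=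
          Summable.tsum_comm' hF1sum (fun ℓ => (hF1ℓ ℓ).summable) (fun ω => (hF1ω ω).summable)
      _ = ∑' ℓ, (n.choose (r+1) : ℝ) * (p ℓ ^ (r+1) * (1 - p ℓ) ^ (n - r - 1)) :=
          tsum_congr fun ℓ => (hF1ℓ ℓ).tsum_eq
      _ = (n.choose (r+1) : ℝ) * ∑' ℓ, p ℓ ^ (r+1) * (1 - p ℓ) ^ (n - r - 1) := tsum_mul_left
  -- the occupancy probability part
  set F2 : A → (Fin n → A) → ℝ :=
    fun ℓ ω => (∏ i, p (ω i)) * (p ℓ * (if occ ω ℓ = r then (1:ℝ) else 0)) with hF2d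
  have hF2nn : ∀ (ℓ : A) (ω : Fin n → A), 0 ≤ F2 ℓ ω := fun ℓ ω =>
    mul_nonneg (Finset.prod_nonneg fun i _ => hp0 _)
      (mul_nonneg (hp0 ℓ) (by split <;> norm_num))
  have hF2ℓ : ∀ ℓ, HasSum (F2 ℓ)
      ((n.choose r : ℝ) * (p ℓ ^ (r+1) * (1 - p ℓ) ^ (n - r))) := by
    intro ℓ
    have h := (hasSum_binom p hp0 hp1 n r ℓ).mul_left (p ℓ)
    have he1 : (fun ω : Fin n → A =>
        p ℓ * ((∏ i, p (ω i)) * (if occ ω ℓ = r then (1:ℝ) else 0))) = F2 ℓ := by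
      funext ω; simp only [F2]; ring
    have he2 : p ℓ * ((n.choose r : ℝ) * (p ℓ ^ r * (1 - p ℓ) ^ (n - r)))
        = (n.choose r : ℝ) * (p ℓ ^ (r+1) * (1 - p ℓ) ^ (n - r)) := by ring
    rw [he1, he2] at h
    exact h
  have hπs : ∀ ω : Fin n → A,
      Summable (fun ℓ => p ℓ * (if occ ω ℓ = r then (1:ℝ) else 0)) := by
    intro ω
    apply Summable.of_nonneg_of_le _ _ hp1.summable
    · intro ℓ; exact mul_nonneg (hp0 ℓ) (by split <;> norm_num)
    · intro ℓ
      by_cases h : occ ω ℓ = r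
      · rw [if_pos h, mul_one]
      · rw [if_neg h, mul_zero]; exact hp0 ℓ
  have hF2ω : ∀ ω : Fin n → A, HasSum (fun ℓ => F2 ℓ ω)
      ((∏ i, p (ω i)) * occProb p ω r) :=
    fun ω => ((hπs ω).hasSum).mul_left _
  have hF2sum : Summable (fun z : A × (Fin n → A) => F2 z.1 z.2) := by
    refine (summable_prod_of_nonneg (fun z => hF2nn z.1 z.2)).mpr
      ⟨fun ℓ => (hF2ℓ ℓ).summable, ?_⟩
    apply Summable.congr (hVsum.mul_left ((n.choose r : ℝ)))
    intro ℓ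
    exact ((hF2ℓ ℓ).tsum_eq).symm
  have hπsummable : Summable (fun ω : Fin n → A => (∏ i, p (ω i)) * occProb p ω r) := by
    have hswap : Summable (fun z : (Fin n → A) × A => F2 z.2 z.1) := hF2sum.prod_symm
    have h := ((summable_prod_of_nonneg (fun z : (Fin n → A) × A => hF2nn z.2 z.1)).mp hswap).2
    apply Summable.congr h
    intro ω
    exact (hF2ω ω).tsum_eq
  have hπtsum : ∑' ω : Fin n → A, (∏ i, p (ω i)) * occProb p ω r
      = (n.choose r : ℝ) * ∑' ℓ, p ℓ ^ (r+1) * (1 - p ℓ) ^ (n - r) := by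
    calc ∑' ω : Fin n → A, (∏ i, p (ω i)) * occProb p ω r
        = ∑' (ω : Fin n → A), ∑' ℓ, F2 ℓ ω := tsum_congr fun ω => ((hF2ω ω).tsum_eq).symm
      _ = ∑' (ℓ : A), ∑' ω, F2 ℓ ω :=
          Summable.tsum_comm' hF2sum (fun ℓ => (hF2ℓ ℓ).summable) (fun ω => (hF2ω ω).summable)
      _ = ∑' ℓ, (n.choose r : ℝ) * (p ℓ ^ (r+1) * (1 - p ℓ) ^ (n - r)) :=
          tsum_congr fun ℓ => (hF2ℓ ℓ).tsum_eq
      _ = (n.choose r : ℝ) * ∑' ℓ, p ℓ ^ (r+1) * (1 - p ℓ) ^ (n - r) := tsum_mul_left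
  -- rewrite the left-hand side
  have hTfun : (fun ω : Fin n → A => (∏ i, p (ω i)) * (turing ω r - occProb p ω r))
      = fun ω : Fin n → A => (((r:ℝ)+1)/(n:ℝ)) * ((∏ i, p (ω i)) * (Ncount ω (r+1) : ℝ))
          - (∏ i, p (ω i)) * occProb p ω r := by
    funext ω
    simp only [turing]
    ring
  rw [hTfun, Summable.tsum_sub (hNsummable.mul_left _) hπsummable, tsum_mul_left, hNtsum, hπtsum]
  -- final algebraic identity
  have hnat : (n.choose (r+1) : ℝ) * ((r:ℝ)+1) = (n.choose r : ℝ) * ((n:ℝ) - (r:ℝ)) := by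
    have h := Nat.choose_succ_right_eq n r
    have hcast : ((n.choose (r+1) * (r+1) : ℕ) : ℝ) = ((n.choose r * (n - r) : ℕ) : ℝ) := by
      exact_mod_cast congrArg (Nat.cast : ℕ → ℝ) h
    push_cast [Nat.cast_sub (by omega : r ≤ n)] at hcast
    linarith [hcast]
  have hkey : ∀ ℓ : A,
      (((r:ℝ)+1)/(n:ℝ)) * ((n.choose (r+1) : ℝ) * (p ℓ ^ (r+1) * (1 - p ℓ) ^ (n - r - 1)))
        - (n.choose r : ℝ) * (p ℓ ^ (r+1) * (1 - p ℓ) ^ (n - r))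
      = (n.choose r : ℝ) * (p ℓ ^ (r+1) * (1 - p ℓ) ^ (n - r - 1) * (p ℓ - (r:ℝ)/(n:ℝ))) := by
    intro ℓ
    have hvsplit : (1 - p ℓ) ^ (n - r) = (1 - p ℓ) ^ (n - r - 1) * (1 - p ℓ) := by
      rw [← pow_succ]
      congr 1
      omega
    rw [hvsplit]
    field_simp
    linear_combination (p ℓ ^ (r+1) * (1 - p ℓ) ^ (n - r - 1)) * hnat
  have hL : HasSum
      (fun ℓ : A =>
        (((r:ℝ)+1)/(n:ℝ)) * ((n.choose (r+1) : ℝ) * (p ℓ ^ (r+1) * (1 - p ℓ) ^ (n - r - 1)))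
          - (n.choose r : ℝ) * (p ℓ ^ (r+1) * (1 - p ℓ) ^ (n - r)))
      ((((r:ℝ)+1)/(n:ℝ)) * ((n.choose (r+1) : ℝ)
          * ∑' ℓ, p ℓ ^ (r+1) * (1 - p ℓ) ^ (n - r - 1))
        - (n.choose r : ℝ) * ∑' ℓ, p ℓ ^ (r+1) * (1 - p ℓ) ^ (n - r)) := by
    have h1 := (hUsum.hasSum.mul_left ((n.choose (r+1) : ℝ))).mul_left (((r:ℝ)+1)/(n:ℝ))
    have h2 := hVsum.hasSum.mul_left ((n.choose r : ℝ))
    exact h1.sub h2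
  have hL' : HasSum
      (fun ℓ : A => (n.choose r : ℝ)
        * (p ℓ ^ (r+1) * (1 - p ℓ) ^ (n - r - 1) * (p ℓ - (r:ℝ)/(n:ℝ))))
      ((((r:ℝ)+1)/(n:ℝ)) * ((n.choose (r+1) : ℝ)
          * ∑' ℓ, p ℓ ^ (r+1) * (1 - p ℓ) ^ (n - r - 1))
        - (n.choose r : ℝ) * ∑' ℓ, p ℓ ^ (r+1) * (1 - p ℓ) ^ (n - r)) := by
    have hfe := funext hkey
    rw [← hfe]
    exact hL
  rw [← hL'.tsum_eq, tsum_mul_left]
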